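/- Let A ∈ ℝ^{m×n} with m < n satisfy the URP, let b ∈ ℝᵐ, and let x be a solution of Aw = b of minimal ‖·‖₀ with k := ‖x‖₀. Let 0 < α ≤ β be such that every nonzero entry of every vector w with Aw = b and ‖w‖₀ ≤ m has magnitude in [α, β]. If 2k ≤ m and μ < min{ α·((m+1−k)/k)·(1 + √(1 − k/(m+1−k))), 2β }, then every global minimizer of G_firm over {w : Aw = b} equals x. -/

import Mathlib

open MeasureTheory Filter
open scoped BigOperators

noncomputable section

/-- `l0 w` is the number of nonzero entries of `w`. -/
def l0 {n : ℕ} (w : Fin n → ℝ) : ℕ := (Finset.univ.filter fun i => w i ≠ 0).card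

/-- Euclidean (`ℓ²`) norm of a vector. -/
def l2 {k : ℕ} (v : Fin k → ℝ) : ℝ := Real.sqrt (∑ i, v i ^ 2)

/-- Restriction `h_T` of a vector to a finset `T` (zero outside `T`). -/
def restr {n : ℕ} (T : Finset (Fin n)) (h : Fin n → ℝ) : Fin n → ℝ :=
  fun i => if i ∈ T then h i else 0

/-- Unique Representation Property: every `m` columns of `A` are linearly independent. -/
def URP {m n : ℕ} (A : Matrix (Fin m) (Fin n) ℝ) : Prop :=
  ∀ S : Finset (Fin n), S.card = m →
    LinearIndependent ℝ (fun j : S => (fun i : Fin m => A i (j : Fin n)))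

/-- Conditions (I)-(II) on the penalty component `g`. -/
def PenaltyConds (g : ℝ → ℝ) : Prop :=
  g 0 = 0 ∧ (∀ w, g (-w) = g w) ∧ Continuous g ∧
    ((StrictMonoOn g (Set.Ioi 0) ∧ StrictConcaveOn ℝ (Set.Ioi 0) g) ∨
      (∃ γ : ℝ, 0 < γ ∧ StrictMonoOn g (Set.Ioc 0 γ) ∧
        StrictConcaveOn ℝ (Set.Ioc 0 γ) g ∧ ∀ w, γ ≤ w → g w = g γ))

/-- Spectral (`ℓ² → ℓ²` operator) norm of a matrix. -/
def specNorm {m n : ℕ} (A : Matrix (Fin m) (Fin n) ℝ) : ℝ :=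
  sSup {c | ∃ v : Fin n → ℝ, l2 v ≤ 1 ∧ c = l2 (A.mulVec v)}

/-- The `p`-shrinkage function `s_{λ,p}`. -/
def pshrinkFun (lam p t : ℝ) : ℝ :=
  if t ≤ 0 then 0 else max (t - lam ^ (2 - p) * t ^ (p - 1)) 0

/-- `f_p(x) = ∫₀ˣ s_{λ,p}(t) dt`. -/
def pf (lam p x : ℝ) : ℝ := ∫ t in (0 : ℝ)..x, pshrinkFun lam p t

/-- Legendre–Fenchel transform `f_p*(w) = sup_{x ≥ 0} (x·w − f_p(x))`. -/
def pfstar (lam p w : ℝ) : ℝ := sSup ((fun x => x * w - pf lam p x) '' Set.Ici 0)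

/-- The induced `p`-shrinkage penalty component `g_p`. -/
def gp (lam p w : ℝ) : ℝ := (pfstar lam p |w| - w ^ 2 / 2) / lam

/-- The induced `p`-shrinkage penalty `G_p`. -/
def Gp (lam p : ℝ) {n : ℕ} (w : Fin n → ℝ) : ℝ := ∑ i, gp lam p (w i)

/-- The `p`-shrinkage mapping `S_p`. -/
def Sp (lam p : ℝ) {n : ℕ} (x : Fin n → ℝ) : Fin n → ℝ :=
  fun i => pshrinkFun lam p |x i| * Real.sign (x i)

/-- The objective `F_p(x) = λ G_p(x) + ½‖Ax − b‖₂²`. -/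
def Fp (lam p : ℝ) {m n : ℕ} (A : Matrix (Fin m) (Fin n) ℝ) (b : Fin m → ℝ)
    (x : Fin n → ℝ) : ℝ :=
  lam * Gp lam p x + (1 / 2) * (l2 (A.mulVec x - b)) ^ 2

/-- Firm-thresholding penalty component. -/
def gfirm (μ w : ℝ) : ℝ := if |w| ≤ μ then |w| - w ^ 2 / (2 * μ) else μ / 2

/-- Firm-thresholding penalty. -/
def Gfirm (μ : ℝ) {n : ℕ} (w : Fin n → ℝ) : ℝ := ∑ i, gfirm μ (w i)

/-- The `m × m` submatrix `A_S` of the columns of `A` indexed by `S`. -/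
def colsub {m n : ℕ} (A : Matrix (Fin m) (Fin n) ℝ)
    (S : {S : Finset (Fin n) // S.card = m}) : Matrix (Fin m) (Fin m) ℝ :=
  Matrix.of fun i j => A i ((S.1.orderIsoOfFin S.2 j : Fin n))

/-- `α_S = ‖A_S⁻¹ b‖_{-∞}`. -/
def alphaS {m n : ℕ} (A : Matrix (Fin m) (Fin n) ℝ) (b : Fin m → ℝ)
    (S : {S : Finset (Fin n) // S.card = m}) : ℝ :=
  ⨅ i, |((colsub A S)⁻¹).mulVec b i|

/-- `β_S = ‖A_S⁻¹ b‖_∞`. -/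
def betaS {m n : ℕ} (A : Matrix (Fin m) (Fin n) ℝ) (b : Fin m → ℝ)
    (S : {S : Finset (Fin n) // S.card = m}) : ℝ :=
  ⨆ i, |((colsub A S)⁻¹).mulVec b i|

/-- `‖A_S⁻¹‖` (spectral norm). -/
def nrmInv {m n : ℕ} (A : Matrix (Fin m) (Fin n) ℝ)
    (S : {S : Finset (Fin n) // S.card = m}) : ℝ :=
  specNorm ((colsub A S)⁻¹)


section Helpers
variable {μ : ℝ}

lemma gfirm_neg (w : ℝ) : gfirm μ (-w) = gfirm μ w := by
  simp [gfirm, abs_neg, neg_pow]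

lemma gfirm_zero (hμ : 0 < μ) : gfirm μ 0 = 0 := by
  simp [gfirm, hμ.le]

lemma gfirm_of_le {a : ℝ} (h0 : 0 ≤ a) (h1 : a ≤ μ) : gfirm μ a = a - a ^ 2 / (2 * μ) := by
  rw [gfirm, abs_of_nonneg h0, if_pos h1]

lemma gfirm_nonneg (hμ : 0 < μ) (w : ℝ) : 0 ≤ gfirm μ w := by
  rw [gfirm]
  split_ifs with h
  · have h2 : (0:ℝ) < 2 * μ := by linarith
    have : |w| - w ^ 2 / (2 * μ) = (2 * μ * |w| - w ^ 2) / (2 * μ) := by field_simp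
    rw [this]
    apply div_nonneg _ h2.le
    nlinarith [abs_nonneg w, sq_abs w]
  · linarith

lemma gfirm_le_half (hμ : 0 < μ) (w : ℝ) : gfirm μ w ≤ μ / 2 := by
  rw [gfirm]
  split_ifs with h
  · have h2 : (0:ℝ) < 2 * μ := by linarith
    rw [← sub_nonneg]
    have : μ / 2 - (|w| - w ^ 2 / (2 * μ)) = (μ ^ 2 - 2 * μ * |w| + w ^ 2) / (2 * μ) := by
      field_simp; ring
    rw [this]
    apply div_nonneg _ h2.le
    nlinarith [sq_nonneg (|w| - μ), sq_abs w]
  · exact le_refl _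

lemma gfirm_mono (hμ : 0 < μ) {a c : ℝ} (h0 : 0 ≤ a) (hac : a ≤ c) :
    gfirm μ a ≤ gfirm μ c := by
  have hc0 : 0 ≤ c := h0.trans hac
  have h2 : (0:ℝ) < 2 * μ := by linarith
  rw [gfirm, gfirm, abs_of_nonneg h0, abs_of_nonneg hc0]
  split_ifs with h1 hh2 hh3
  · rw [← sub_nonneg]
    have : c - c ^ 2 / (2 * μ) - (a - a ^ 2 / (2 * μ))
        = ((c - a) * (2 * μ - a - c)) / (2 * μ) := by field_simp; ring
    rw [this]
    apply div_nonneg _ h2.le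
    nlinarith
  · rw [← sub_nonneg]
    have : μ / 2 - (a - a ^ 2 / (2 * μ)) = (μ - a) ^ 2 / (2 * μ) := by field_simp; ring
    rw [this]; positivity
  · linarith
  · exact le_refl _

lemma gfirm_abs (w : ℝ) : gfirm μ |w| = gfirm μ w := by
  simp [gfirm, abs_abs, sq_abs]


-- q(s) = s - s^2/(2μ) is nondecreasing on [0, μ]
lemma qmono (hμ : 0 < μ) {p r : ℝ} (h0 : 0 ≤ p) (hpr : p ≤ r) (hr : r ≤ μ) :
    p - p ^ 2 / (2 * μ) ≤ r - r ^ 2 / (2 * μ) := by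
  have h2 : (0:ℝ) < 2 * μ := by linarith
  rw [← sub_nonneg]
  have : r - r ^ 2 / (2 * μ) - (p - p ^ 2 / (2 * μ))
      = ((r - p) * (2 * μ - p - r)) / (2 * μ) := by field_simp; ring
  rw [this]
  apply div_nonneg _ h2.le
  nlinarith

lemma gfirm_min (hμ : 0 < μ) {s : ℝ} (hs : 0 ≤ s) :
    gfirm μ s = min s μ - (min s μ) ^ 2 / (2 * μ) := by
  rw [gfirm, abs_of_nonneg hs]
  split_ifs with h
  · rw [min_eq_left h]
  · rw [min_eq_right (by linarith : μ ≤ s)]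
    field_simp
    ring

lemma gfirm_seg_nonneg (hμ : 0 < μ) {lam a c : ℝ} (h0 : 0 ≤ lam) (h1 : lam ≤ 1)
    (ha : 0 ≤ a) (hc : 0 ≤ c) :
    lam * gfirm μ a + (1 - lam) * gfirm μ c ≤ gfirm μ (lam * a + (1 - lam) * c) := by
  have h1' : 0 ≤ 1 - lam := by linarith
  set A := min a μ with hA
  set C := min c μ with hC
  have hA0 : 0 ≤ A := le_min ha hμ.le
  have hC0 : 0 ≤ C := le_min hc hμ.le
  have hAμ : A ≤ μ := min_le_right _ _
  have hCμ : C ≤ μ := min_le_right _ _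
  have hm0 : 0 ≤ lam * a + (1 - lam) * c := by positivity
  set E := lam * A + (1 - lam) * C with hE
  have hE0 : 0 ≤ E := by positivity
  have hEμ : E ≤ μ := by nlinarith
  have hEM : E ≤ min (lam * a + (1 - lam) * c) μ := by
    apply le_min _ hEμ
    have : A ≤ a := min_le_left _ _
    have : C ≤ c := min_le_left _ _
    apply add_le_add (mul_le_mul_of_nonneg_left (min_le_left _ _) h0)
      (mul_le_mul_of_nonneg_left (min_le_left _ _) h1')
  rw [gfirm_min hμ ha, gfirm_min hμ hc, gfirm_min hμ hm0]
  have step1 : lam * (A - A ^ 2 / (2 * μ)) + (1 - lam) * (C - C ^ 2 / (2 * μ))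
      ≤ E - E ^ 2 / (2 * μ) := by
    rw [← sub_nonneg]
    have : E - E ^ 2 / (2 * μ) - (lam * (A - A ^ 2 / (2 * μ)) + (1 - lam) * (C - C ^ 2 / (2 * μ)))
        = (lam * (1 - lam) * (A - C) ^ 2) / (2 * μ) := by rw [hE]; field_simp; ring
    rw [this]
    apply div_nonneg _ (by linarith)
    apply mul_nonneg (mul_nonneg h0 h1') (sq_nonneg _)
  have step2 := qmono hμ hE0 hEM (min_le_right _ _)
  linarith

lemma gfirm_seg (hμ : 0 < μ) {lam a c : ℝ} (h0 : 0 ≤ lam) (h1 : lam ≤ 1)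
    (hac : 0 ≤ a * c) :
    lam * gfirm μ a + (1 - lam) * gfirm μ c ≤ gfirm μ (lam * a + (1 - lam) * c) := by
  rcases mul_nonneg_iff.mp hac with ⟨ha, hc⟩ | ⟨ha, hc⟩
  · exact gfirm_seg_nonneg hμ h0 h1 ha hc
  · have := gfirm_seg_nonneg hμ h0 h1 (neg_nonneg.2 ha) (neg_nonneg.2 hc)
    rw [gfirm_neg, gfirm_neg] at this
    have heq : lam * -a + (1 - lam) * -c = -(lam * a + (1 - lam) * c) := by ring
    rw [heq, gfirm_neg] at this
    exact this


lemma key_aux {n : ℕ} (hμ : 0 < μ) (y h : Fin n → ℝ)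
    (hsupp : ∀ i, h i ≠ 0 → y i ≠ 0)
    (hmin : ∀ t : ℝ, Gfirm μ y ≤ Gfirm μ (fun i => y i + t * h i))
    (j : Fin n) (hj : h j ≠ 0) (hjpos : 0 < -y j / h j)
    (hmin2 : ∀ i, h i ≠ 0 → 0 < -y i / h i → -y j / h j ≤ -y i / h i)
    (ε : ℝ) (hε : 0 < ε)
    (hεneg : ∀ i, h i ≠ 0 → -y i / h i < 0 → -y i / h i ≤ -ε) : False := by
  set b := -y j / h j with hb
  have habsj : 0 < |h j| := abs_pos.2 hj
  set δ := min (b / 2) (μ / |h j|) with hδdef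
  have hδ : 0 < δ := lt_min (by linarith) (div_pos hμ habsj)
  have hδb : δ ≤ b / 2 := min_le_left _ _
  set u := b - δ with hu
  set v := b - δ / 2 with hv
  have hu0 : 0 < u := by rw [hu]; linarith
  have huv : u < v := by rw [hu, hv]; linarith
  have hvb : v < b := by rw [hv]; linarith
  have hv0 : 0 < v := by linarith
  set a := |h j| * δ with ha
  have ha0 : 0 < a := mul_pos habsj hδ
  have haμ : a ≤ μ := by
    calc a ≤ |h j| * (μ / |h j|) :=
          mul_le_mul_of_nonneg_left (min_le_right _ _) habsj.le
    _ = μ := by field_simp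
  set φ : ℝ → ℝ := fun t => ∑ i, gfirm μ (y i + t * h i) with hφ
  have hφmin : ∀ t, φ 0 ≤ φ t := by
    intro t
    have h1 : Gfirm μ y = φ 0 := by simp [hφ, Gfirm]
    have h2 := hmin t
    rw [h1] at h2
    exact h2
  have hrep : ∀ i, h i ≠ 0 → ∀ t : ℝ, y i + t * h i = h i * (t - -y i / h i) := by
    intro i hi t; field_simp; ring
  have hcross : ∀ i, h i ≠ 0 → (-y i / h i ≤ -ε ∨ b ≤ -y i / h i) := by
    intro i hi
    rcases lt_trichotomy (-y i / h i) 0 with hlt | heq | hgt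
    · exact Or.inl (hεneg i hi hlt)
    · exact absurd heq (div_ne_zero (neg_ne_zero.2 (hsupp i hi)) hi)
    · exact Or.inr (hmin2 i hi hgt)
  have hsame : ∀ i, ∀ p r : ℝ, -ε ≤ p → p ≤ r → r ≤ b →
      0 ≤ (y i + p * h i) * (y i + r * h i) := by
    intro i p r hp hpr hr
    by_cases hi : h i = 0
    · simp [hi]; exact mul_self_nonneg _
    · rw [hrep i hi p, hrep i hi r]
      have heq2 : h i * (p - -y i / h i) * (h i * (r - -y i / h i))
          = h i ^ 2 * ((p - -y i / h i) * (r - -y i / h i)) := by ring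
      rw [heq2]
      apply mul_nonneg (sq_nonneg _)
      rcases hcross i hi with hc | hc
      · apply mul_nonneg <;> linarith
      · rw [show (p - -y i / h i) * (r - -y i / h i)
            = (-(p - -y i / h i)) * (-(r - -y i / h i)) by ring]
        apply mul_nonneg <;> linarith
  -- midpoint inequality per index
  have hmid : ∀ i, (1/2 : ℝ) * gfirm μ (y i + u * h i) + (1 - 1/2) * gfirm μ (y i + b * h i)
      ≤ gfirm μ (y i + v * h i) := by
    intro i
    have heq : (1/2 : ℝ) * (y i + u * h i) + (1 - 1/2) * (y i + b * h i)
        = y i + v * h i := by rw [hu, hv]; ring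
    rw [← heq]
    exact gfirm_seg hμ (by norm_num) (by norm_num)
      (hsame i u b (by linarith) (by linarith) le_rfl)
  -- exact values at j
  have hyj : y j = -(b * h j) := by
    rw [hb]; field_simp
  have hjb : y j + b * h j = 0 := by rw [hyj]; ring
  have hju : y j + u * h j = -(h j * δ) := by rw [hyj, hu]; ring
  have hjv : y j + v * h j = -(h j * (δ/2)) := by rw [hyj, hv]; ring
  have habsδ : |h j * δ| = a := by
    rw [abs_mul, abs_of_nonneg hδ.le, ha]
  have habsδ2 : |h j * (δ/2)| = a / 2 := by
    rw [abs_mul, abs_of_nonneg (by linarith : (0:ℝ) ≤ δ/2), ha]; ring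
  have gju : gfirm μ (y j + u * h j) = a - a ^ 2 / (2 * μ) := by
    rw [hju, gfirm_neg, ← gfirm_abs, habsδ]
    exact gfirm_of_le ha0.le haμ
  have gjv : gfirm μ (y j + v * h j) = a/2 - (a/2) ^ 2 / (2 * μ) := by
    rw [hjv, gfirm_neg, ← gfirm_abs, habsδ2]
    exact gfirm_of_le (by linarith) (by linarith)
  have gjb : gfirm μ (y j + b * h j) = 0 := by rw [hjb]; exact gfirm_zero hμ
  have hjterm : (1/2 : ℝ) * gfirm μ (y j + u * h j) + (1 - 1/2) * gfirm μ (y j + b * h j)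
      + a ^ 2 / (8 * μ) = gfirm μ (y j + v * h j) := by
    rw [gju, gjv, gjb]; field_simp; ring
  -- sum midpoint inequality
  have hsum1 : (1/2 : ℝ) * φ u + (1 - 1/2) * φ b + a ^ 2 / (8 * μ) ≤ φ v := by
    have hsplit : ∀ t : ℝ, φ t = (∑ i ∈ Finset.univ.erase j, gfirm μ (y i + t * h i))
        + gfirm μ (y j + t * h j) := by
      intro t
      rw [hφ]
      exact (Finset.sum_erase_add _ _ (Finset.mem_univ j)).symm
    rw [hsplit u, hsplit b, hsplit v]
    have hsum : ∑ i ∈ Finset.univ.erase j,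
        ((1/2 : ℝ) * gfirm μ (y i + u * h i) + (1 - 1/2) * gfirm μ (y i + b * h i))
        ≤ ∑ i ∈ Finset.univ.erase j, gfirm μ (y i + v * h i) :=
      Finset.sum_le_sum (fun i _ => hmid i)
    rw [Finset.sum_add_distrib, ← Finset.mul_sum, ← Finset.mul_sum] at hsum
    linarith [hjterm]
  -- three-point inequality with -ε
  set lam := v / (v + ε) with hlam
  have hvε : 0 < v + ε := by linarith
  have hlam0 : 0 ≤ lam := by positivity
  have hlam1 : lam ≤ 1 := by rw [hlam, div_le_one hvε]; linarith
  have h1lam : 1 - lam = ε / (v + ε) := by rw [hlam]; field_simp; ring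
  have h1lampos : 0 < 1 - lam := by rw [h1lam]; positivity
  have hscal : lam * (-ε) + (1 - lam) * v = 0 := by
    rw [h1lam, hlam]; field_simp; ring
  have h3pt : ∀ i, lam * gfirm μ (y i + (-ε) * h i) + (1 - lam) * gfirm μ (y i + v * h i)
      ≤ gfirm μ (y i + 0 * h i) := by
    intro i
    have heq : lam * (y i + (-ε) * h i) + (1 - lam) * (y i + v * h i)
        = y i + 0 * h i := by
      have e1 : lam * (y i + (-ε) * h i) + (1 - lam) * (y i + v * h i)
          = y i + (lam * (-ε) + (1 - lam) * v) * h i := by ring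
      rw [e1, hscal]
    rw [← heq]
    exact gfirm_seg hμ hlam0 hlam1 (hsame i (-ε) v le_rfl (by linarith) (by linarith))
  have hsum2 : lam * φ (-ε) + (1 - lam) * φ v ≤ φ 0 := by
    rw [hφ]
    have := Finset.sum_le_sum (fun i (_ : i ∈ Finset.univ) => h3pt i)
    rw [Finset.sum_add_distrib, ← Finset.mul_sum, ← Finset.mul_sum] at this
    exact this
  -- combine
  have hA := hφmin (-ε)
  have hB := hφmin u
  have hC := hφmin b
  have hpos : 0 < a ^ 2 / (8 * μ) := by positivity
  have h4 : lam * φ 0 ≤ lam * φ (-ε) := mul_le_mul_of_nonneg_left hA hlam0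
  have h5 : (1 - lam) * φ v ≤ (1 - lam) * φ 0 := by linarith
  have hle : φ v ≤ φ 0 := (mul_le_mul_iff_right₀ h1lampos).mp h5
  linarith


lemma key1 {n : ℕ} (hμ : 0 < μ) (y h : Fin n → ℝ)
    (hsupp : ∀ i, h i ≠ 0 → y i ≠ 0)
    (hmin : ∀ t : ℝ, Gfirm μ y ≤ Gfirm μ (fun i => y i + t * h i))
    (hpos : ∃ i, h i ≠ 0 ∧ 0 < -y i / h i) : False := by
  classical
  set P := Finset.univ.filter (fun i => h i ≠ 0 ∧ 0 < -y i / h i) with hP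
  have hPne : P.Nonempty := by
    obtain ⟨i, hi1, hi2⟩ := hpos
    exact ⟨i, by simp [hP, hi1, hi2]⟩
  obtain ⟨j, hjP, hjmin⟩ := Finset.exists_min_image P (fun i => -y i / h i) hPne
  rw [hP, Finset.mem_filter] at hjP
  obtain ⟨-, hj, hjpos⟩ := hjP
  set Q := Finset.univ.filter (fun i => h i ≠ 0) with hQ
  have hQne : Q.Nonempty := ⟨j, by simp [hQ, hj]⟩
  obtain ⟨i0, hi0Q, hi0min⟩ := Finset.exists_min_image Q (fun i => |-y i / h i|) hQne
  have hi0 : h i0 ≠ 0 := by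
    rw [hQ, Finset.mem_filter] at hi0Q; exact hi0Q.2
  set ε := |-y i0 / h i0| with hε'
  have hε : 0 < ε := abs_pos.2 (div_ne_zero (neg_ne_zero.2 (hsupp i0 hi0)) hi0)
  apply key_aux hμ y h hsupp hmin j hj hjpos ?_ ε hε ?_
  · intro i hi hipos
    exact hjmin i (by simp [hP, hi, hipos])
  · intro i hi hineg
    have h2 : ε ≤ |-y i / h i| := hi0min i (by simp [hQ, hi])
    rw [abs_of_neg hineg] at h2
    linarith

lemma key {n : ℕ} (hμ : 0 < μ) (y h : Fin n → ℝ) (hne : ∃ i, h i ≠ 0)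
    (hsupp : ∀ i, h i ≠ 0 → y i ≠ 0)
    (hmin : ∀ t : ℝ, Gfirm μ y ≤ Gfirm μ (fun i => y i + t * h i)) : False := by
  by_cases hpos : ∃ i, h i ≠ 0 ∧ 0 < -y i / h i
  · exact key1 hμ y h hsupp hmin hpos
  · apply key1 hμ y (fun i => -h i) ?_ ?_ ?_
    · intro i hi
      exact hsupp i (by simpa using hi)
    · intro t
      have e1 : (fun i => y i + t * -h i) = (fun i => y i + (-t) * h i) := by
        funext i; ring
      rw [e1]
      exact hmin (-t)
    · obtain ⟨i, hi⟩ := hne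
      have hti : -y i / h i ≠ 0 := div_ne_zero (neg_ne_zero.2 (hsupp i hi)) hi
      have hnp : ¬ 0 < -y i / h i := fun hc => hpos ⟨i, hi, hc⟩
      have hlt : -y i / h i < 0 := lt_of_le_of_ne (not_lt.mp hnp) hti
      refine ⟨i, neg_ne_zero.2 hi, ?_⟩
      have e2 : -y i / -h i = -(-y i / h i) := by
        rw [div_neg]
      rw [e2]
      linarith


lemma exists_null {m n : ℕ} (A : Matrix (Fin m) (Fin n) ℝ) (T : Finset (Fin n))
    (hT : m + 1 ≤ T.card) :
    ∃ h : Fin n → ℝ, (∃ i, h i ≠ 0) ∧ A.mulVec h = 0 ∧ ∀ i, h i ≠ 0 → i ∈ T := by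
  classical
  have hli : ¬ LinearIndependent ℝ (fun j : T => (fun i : Fin m => A i (j : Fin n))) := by
    intro hli
    have := hli.fintype_card_le_finrank
    rw [Module.finrank_fin_fun, Fintype.card_coe] at this
    omega
  obtain ⟨g, hg0, i0, hgi0⟩ := Fintype.not_linearIndependent_iff.mp hli
  set h : Fin n → ℝ := fun i => if hi : i ∈ T then g ⟨i, hi⟩ else 0 with hh
  have hmem : ∀ i, h i ≠ 0 → i ∈ T := by
    intro i hi
    by_contra hmem
    simp [hh, hmem] at hi
  refine ⟨h, ⟨i0, by simp [hh, i0.2, hgi0]⟩, ?_, hmem⟩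
  funext r
  have hr := congrFun hg0 r
  rw [Finset.sum_apply] at hr
  simp only [Pi.smul_apply, smul_eq_mul, Pi.zero_apply] at hr
  show (A.mulVec h) r = 0
  rw [Matrix.mulVec, dotProduct]
  rw [← Finset.sum_subset (Finset.subset_univ T)
    (fun x _ hx => by simp [hh, hx])]
  rw [← Finset.sum_attach T (fun i => A r i * h i)]
  rw [← hr]
  rw [Finset.univ_eq_attach] at *
  apply Finset.sum_congr rfl
  intro j _
  simp [hh, j.2, mul_comm]

lemma urp_null {m n : ℕ} (hmn : m ≤ n) {A : Matrix (Fin m) (Fin n) ℝ} (hA : URP A)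
    {h : Fin n → ℝ} (hnull : A.mulVec h = 0) (hne : h ≠ 0) : m + 1 ≤ l0 h := by
  classical
  by_contra hc
  push_neg at hc
  have hcard : (Finset.univ.filter fun i => h i ≠ 0).card ≤ m := by
    rw [l0] at hc; omega
  obtain ⟨S, hsub, hScard⟩ := Finset.exists_superset_card_eq hcard (by simpa using hmn)
  have hli := hA S hScard
  have hzero : ∀ i, i ∉ S → h i = 0 := by
    intro i hi
    by_contra hne2
    exact hi (hsub (Finset.mem_filter.mpr ⟨Finset.mem_univ _, hne2⟩))
  have hsum : ∑ j : S, h (j : Fin n) • (fun i : Fin m => A i (j : Fin n)) = 0 := by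
    funext r
    rw [Finset.sum_apply]
    simp only [Pi.smul_apply, smul_eq_mul, Pi.zero_apply]
    have h1 : ∑ j : S, h (j : Fin n) * A r (j : Fin n)
        = ∑ i ∈ S, h i * A r i := by
      rw [Finset.univ_eq_attach]
      exact Finset.sum_attach S (fun i => h i * A r i)
    rw [h1, Finset.sum_subset (Finset.subset_univ S)
      (fun x _ hx => by rw [hzero x hx]; ring)]
    have := congrFun hnull r
    rw [Matrix.mulVec, dotProduct] at this
    simp only [Pi.zero_apply] at this
    rw [← this]
    exact Finset.sum_congr rfl (fun i _ => mul_comm _ _)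
  have hz := Fintype.linearIndependent_iff.mp hli (fun j => h (j : Fin n)) hsum
  apply hne
  funext i
  by_cases hi : i ∈ S
  · exact hz ⟨i, hi⟩
  · exact hzero i hi


lemma final_contra {μ α K M : ℝ} (hμ : 0 < μ) (hα : 0 < α) (hK1 : 1 ≤ K)
    (hMK : K + 1 ≤ M)
    (hμbd1 : μ < α * (M / K) * (1 + Real.sqrt (1 - K / M)))
    (hchain : M * gfirm μ α ≤ K * (μ / 2)) : False := by
  have hK0 : (0:ℝ) < K := by linarith
  have hM0 : (0:ℝ) < M := by linarith
  by_cases hcase : μ ≤ α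
  · have hgα : gfirm μ α = μ / 2 := by
      rw [gfirm, abs_of_pos hα]
      split_ifs with hif
      · have : α = μ := le_antisymm hif hcase
        rw [this]; field_simp; ring
      · rfl
    rw [hgα] at hchain
    nlinarith
  · push_neg at hcase
    have hgα : gfirm μ α = α - α ^ 2 / (2 * μ) := gfirm_of_le hα.le hcase.le
    set s : ℝ := Real.sqrt (1 - K / M) with hs
    have hKM : K / M < 1 := (div_lt_one hM0).2 (by linarith)
    have hKM0 : 0 < K / M := div_pos hK0 hM0
    have hs2 : s ^ 2 = 1 - K / M := Real.sq_sqrt (by linarith)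
    have hs0 : 0 < s := Real.sqrt_pos.2 (by linarith)
    have hs1 : s < 1 := by nlinarith
    have hMs : M * s ^ 2 = M - K := by
      rw [hs2]; field_simp
    have h1 : K * μ < α * M * (1 + s) := by
      have h2 := mul_lt_mul_of_pos_left hμbd1 hK0
      have e : K * (α * (M / K) * (1 + s)) = α * M * (1 + s) := by
        field_simp
      linarith [e ▸ h2]
    have h2 : α * M * (1 - s) < K * μ := by
      have hMs' : M * (1 - s) < K := by nlinarith [mul_pos hM0 hs0]
      nlinarith
    have hsq : (K * μ - M * α) ^ 2 < (M * α * s) ^ 2 :=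
      sq_lt_sq' (by nlinarith) (by nlinarith)
    have hexp : (M * α * s) ^ 2 = M ^ 2 * α ^ 2 - K * M * α ^ 2 := by
      have e1 : (M * α * s) ^ 2 = M ^ 2 * α ^ 2 * s ^ 2 := by ring
      rw [e1, hs2]
      field_simp
    have h2μ : (0:ℝ) < 2 * μ := by linarith
    have H' : M * (2 * μ * α - α ^ 2) ≤ K * μ ^ 2 := by
      rw [hgα] at hchain
      have h3 := mul_le_mul_of_nonneg_left hchain h2μ.le
      have e : (2 * μ) * (M * (α - α ^ 2 / (2 * μ))) = M * (2 * μ * α - α ^ 2) := by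
        field_simp
      have e2 : (2 * μ) * (K * (μ / 2)) = K * μ ^ 2 := by ring
      linarith
    nlinarith [mul_le_mul_of_nonneg_left H' hK0.le, hsq, hexp]


end Helpers

/-- `G_firm` exact recovery. -/
theorem stmt6 {m n : ℕ} (hmn : m < n) (A : Matrix (Fin m) (Fin n) ℝ) (hA : URP A)
    (b : Fin m → ℝ) (μ : ℝ) (hμ : 0 < μ)
    (x : Fin n → ℝ) (hxf : A.mulVec x = b)
    (hxmin : ∀ w : Fin n → ℝ, A.mulVec w = b → l0 x ≤ l0 w)
    (α β : ℝ) (hα : 0 < α) (hαβ : α ≤ β)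
    (hbound : ∀ w : Fin n → ℝ, A.mulVec w = b → l0 w ≤ m →
      ∀ i, w i ≠ 0 → α ≤ |w i| ∧ |w i| ≤ β)
    (hk : 2 * l0 x ≤ m)
    (hμbd : μ < min
      (α * (((m : ℝ) + 1 - (l0 x : ℝ)) / (l0 x : ℝ)) *
        (1 + Real.sqrt (1 - (l0 x : ℝ) / ((m : ℝ) + 1 - (l0 x : ℝ)))))
      (2 * β))
    (xstar : Fin n → ℝ) (hfs : A.mulVec xstar = b)
    (hmin : ∀ w : Fin n → ℝ, A.mulVec w = b → Gfirm μ xstar ≤ Gfirm μ w) :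
    xstar = x := by
  classical
  have hμbd1 := (lt_min_iff.mp hμbd).1
  -- k ≥ 1
  have hk1 : 1 ≤ l0 x := by
    by_contra hc
    push_neg at hc
    have h0 : (l0 x : ℝ) = 0 := by
      have : l0 x = 0 := by omega
      simp [this]
    rw [h0] at hμbd1
    simp only [div_zero, mul_zero, zero_mul] at hμbd1
    linarith
  -- Step A : l0 xstar ≤ m
  have hstar_le : l0 xstar ≤ m := by
    by_contra hc
    push_neg at hc
    have hc' : m + 1 ≤ (Finset.univ.filter fun i => xstar i ≠ 0).card := by
      rw [l0] at hc; omega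
    obtain ⟨T, hTsub, hTcard⟩ := Finset.exists_subset_card_eq hc'
    obtain ⟨h, hne, hnull, hsuppT⟩ := exists_null A T (le_of_eq hTcard.symm)
    apply key hμ xstar h hne
    · intro i hi
      have := hTsub (hsuppT i hi)
      simpa using this
    · intro t
      apply hmin
      have e1 : (fun i => xstar i + t * h i) = xstar + t • h := by
        funext i; simp [mul_comm]
      rw [e1, Matrix.mulVec_add, Matrix.mulVec_smul, hnull, hfs]
      simp
  -- Step B
  by_contra hxs
  set h : Fin n → ℝ := fun i => xstar i - x i with hh
  have hne : h ≠ 0 := by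
    intro h0
    apply hxs
    funext i
    have := congrFun h0 i
    simpa [hh, sub_eq_zero] using this
  have hnull : A.mulVec h = 0 := by
    have e1 : h = xstar - x := rfl
    rw [e1, Matrix.mulVec_sub, hfs, hxf, sub_self]
  have hl0h : m + 1 ≤ l0 h := urp_null (le_of_lt hmn) hA hnull hne
  set D := (Finset.univ.filter fun i => h i ≠ 0) \ (Finset.univ.filter fun i => x i ≠ 0)
    with hD
  have hDcard : m + 1 ≤ D.card + l0 x := by
    have hsub : (Finset.univ.filter fun i => h i ≠ 0)
        ⊆ D ∪ (Finset.univ.filter fun i => x i ≠ 0) := by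
      intro i hi
      by_cases hx : i ∈ (Finset.univ.filter fun i => x i ≠ 0)
      · exact Finset.mem_union_right _ hx
      · exact Finset.mem_union_left _ (Finset.mem_sdiff.mpr ⟨hi, hx⟩)
    calc m + 1 ≤ l0 h := hl0h
    _ = (Finset.univ.filter fun i => h i ≠ 0).card := rfl
    _ ≤ (D ∪ (Finset.univ.filter fun i => x i ≠ 0)).card := Finset.card_le_card hsub
    _ ≤ D.card + (Finset.univ.filter fun i => x i ≠ 0).card := Finset.card_union_le _ _
    _ = D.card + l0 x := rfl
  have hDentry : ∀ i ∈ D, α ≤ |xstar i| := by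
    intro i hiD
    rw [hD, Finset.mem_sdiff] at hiD
    obtain ⟨hi1, hi2⟩ := hiD
    have hhi : h i ≠ 0 := (Finset.mem_filter.mp hi1).2
    have hxi : x i = 0 := by
      by_contra hxi
      exact hi2 (Finset.mem_filter.mpr ⟨Finset.mem_univ _, hxi⟩)
    have hstar_ne : xstar i ≠ 0 := by
      intro h0
      apply hhi
      rw [hh]
      simp [h0, hxi]
    exact (hbound xstar hfs hstar_le i hstar_ne).1
  have hlow : (D.card : ℝ) * gfirm μ α ≤ Gfirm μ xstar := by
    calc (D.card : ℝ) * gfirm μ α = ∑ _i ∈ D, gfirm μ α := by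
          rw [Finset.sum_const, nsmul_eq_mul]
    _ ≤ ∑ i ∈ D, gfirm μ (xstar i) := by
        apply Finset.sum_le_sum
        intro i hi
        calc gfirm μ α ≤ gfirm μ |xstar i| := gfirm_mono hμ hα.le (hDentry i hi)
        _ = gfirm μ (xstar i) := gfirm_abs _
    _ ≤ ∑ i, gfirm μ (xstar i) :=
        Finset.sum_le_sum_of_subset_of_nonneg (Finset.subset_univ D)
          (fun i _ _ => gfirm_nonneg hμ _)
    _ = Gfirm μ xstar := rfl
  have hup : Gfirm μ x ≤ (l0 x : ℝ) * (μ / 2) := by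
    rw [Gfirm]
    rw [← Finset.sum_subset (Finset.subset_univ (Finset.univ.filter fun i => x i ≠ 0))
      (fun i _ hi => by
        have : x i = 0 := by simpa using hi
        rw [this]; exact gfirm_zero hμ)]
    calc ∑ i ∈ (Finset.univ.filter fun i => x i ≠ 0), gfirm μ (x i)
        ≤ ∑ _i ∈ (Finset.univ.filter fun i => x i ≠ 0), μ / 2 :=
          Finset.sum_le_sum (fun i _ => gfirm_le_half hμ _)
    _ = (l0 x : ℝ) * (μ / 2) := by
        rw [Finset.sum_const, nsmul_eq_mul]; rfl
  set K : ℝ := (l0 x : ℝ) with hK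
  set M : ℝ := (m : ℝ) + 1 - K with hM
  have hK1 : 1 ≤ K := by rw [hK]; exact_mod_cast hk1
  have hK0 : (0:ℝ) < K := by linarith
  have hMK : K + 1 ≤ M := by
    rw [hM, hK]
    have : (2 * l0 x : ℝ) ≤ (m : ℝ) := by exact_mod_cast hk
    push_cast at this ⊢
    linarith
  have hM0 : (0:ℝ) < M := by linarith
  have hg0 : 0 ≤ gfirm μ α := gfirm_nonneg hμ _
  have hchain : M * gfirm μ α ≤ K * (μ / 2) := by
    have hcast : M ≤ (D.card : ℝ) := by
      rw [hM, hK]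
      have : ((m:ℕ) + 1 : ℝ) ≤ (D.card : ℝ) + (l0 x : ℝ) := by exact_mod_cast hDcard
      push_cast at this ⊢
      linarith
    have h1 : M * gfirm μ α ≤ (D.card : ℝ) * gfirm μ α :=
      mul_le_mul_of_nonneg_right hcast hg0
    have h2 := hmin x hxf
    exact le_trans h1 (le_trans hlow (le_trans h2 hup))
  exact final_contra hμ hα hK1 hMK hμbd1 hchain

end
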